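/- Strong Nullstellensatz over a finite field: for any ideal J ⊆ 𝔽_q[x_1,...,x_n], the ideal I(V(J)) of polynomials vanishing on the affine variety V(J) ⊆ 𝔽_q^n equals J + ⟨x_1^q - x_1, ..., x_n^q - x_n⟩. -/

import Mathlib

open MvPolynomial

universe u

private lemma pow_reduce {R : Type*} [Monoid R] (y : R) (q : ℕ) (hq : 2 ≤ q)
    (hy : y ^ q = y) : ∀ e, ∃ e' ≤ q - 1, y ^ e = y ^ e' := by
  intro e
  induction e using Nat.strong_induction_on with
  | _ e ih =>
    by_cases h : e ≤ q - 1
    · exact ⟨e, h, rfl⟩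
    · obtain ⟨e', he', hy'⟩ := ih (e - q + 1) (by omega)
      refine ⟨e', he', ?_⟩
      calc y ^ e = y ^ (e - q) * y ^ q := by rw [← pow_add]; congr 1; omega
        _ = y ^ (e - q) * y ^ 1 := by rw [hy, pow_one]
        _ = y ^ (e - q + 1) := by rw [← pow_add]
        _ = y ^ e' := hy'

private lemma eval_span_zero (F : Type*) [Field F] [Fintype F] (n : ℕ)
    (v : Fin n → F) (g : MvPolynomial (Fin n) F)
    (hg : g ∈ Ideal.span (Set.range fun i : Fin n =>
      MvPolynomial.X i ^ Fintype.card F - MvPolynomial.X i)) :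
    MvPolynomial.eval v g = 0 := by
  have h : Ideal.span (Set.range fun i : Fin n =>
      MvPolynomial.X i ^ Fintype.card F - MvPolynomial.X i)
      ≤ RingHom.ker (MvPolynomial.eval v) := by
    rw [Ideal.span_le]
    rintro _ ⟨i, rfl⟩
    simp [RingHom.mem_ker, FiniteField.pow_card]
  exact h hg

set_option maxHeartbeats 800000 in
set_option synthInstance.maxHeartbeats 200000 in
private lemma reduce_mod_span (F : Type*) [Field F] [Fintype F] (n : ℕ)
    (p : MvPolynomial (Fin n) F) :
    ∃ r ∈ restrictDegree (Fin n) F (Fintype.card F - 1),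
      p - r ∈ Ideal.span (Set.range fun i : Fin n =>
        MvPolynomial.X i ^ Fintype.card F - MvPolynomial.X i) := by
  classical
  set I := Ideal.span (Set.range fun i : Fin n =>
    (MvPolynomial.X i : MvPolynomial (Fin n) F) ^ Fintype.card F - MvPolynomial.X i) with hI
  set q := Fintype.card F with hq
  have hq2 : 2 ≤ q := Fintype.one_lt_card
  have hX : ∀ i : Fin n, (Ideal.Quotient.mk I (X i)) ^ q = Ideal.Quotient.mk I (X i) := by
    intro i
    rw [← map_pow, Ideal.Quotient.eq]
    exact Ideal.subset_span ⟨i, rfl⟩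
  have key : ∀ (e : Fin n →₀ ℕ) (c : F), Ideal.Quotient.mk I (monomial e c)
      = Ideal.Quotient.mk I (C c) * ∏ i, (Ideal.Quotient.mk I (X i)) ^ e i := by
    intro e c
    rw [monomial_eq, map_mul]
    congr 1
    rw [Finsupp.prod_fintype _ _ (fun i => pow_zero _), map_prod]
    simp [map_pow]
  induction p using MvPolynomial.induction_on' with
  | monomial d c =>
    choose e' he' hpow using fun i : Fin n =>
      pow_reduce (Ideal.Quotient.mk I (X i)) q hq2 (hX i) (d i)
    set d' : Fin n →₀ ℕ := Finsupp.equivFunOnFinite.symm e' with hd'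
    have hd'app : ∀ i, d' i = e' i := fun i => rfl
    refine ⟨monomial d' c, ?_, ?_⟩
    · rw [mem_restrictDegree]
      intro s hs i
      rw [support_monomial] at hs
      split_ifs at hs with hc
      · simp at hs
      · simp only [Finset.mem_singleton] at hs
        subst hs
        rw [hd'app]
        exact he' i
    · rw [← Ideal.Quotient.eq, key, key]
      congr 1
      refine Finset.prod_congr rfl fun i _ => ?_
      rw [hd'app]
      exact hpow i
  | add p1 p2 ih1 ih2 =>
    obtain ⟨r1, hr1, hm1⟩ := ih1
    obtain ⟨r2, hr2, hm2⟩ := ih2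
    refine ⟨r1 + r2, add_mem hr1 hr2, ?_⟩
    have := add_mem hm1 hm2
    rwa [show p1 - r1 + (p2 - r2) = p1 + p2 - (r1 + r2) by ring] at this

private lemma vanishing_mem_span (F : Type u) [Field F] [Fintype F] (n : ℕ)
    (p : MvPolynomial (Fin n) F) (h : ∀ v : Fin n → F, MvPolynomial.eval v p = 0) :
    p ∈ Ideal.span (Set.range fun i : Fin n =>
      MvPolynomial.X i ^ Fintype.card F - MvPolynomial.X i) := by
  classical
  set I := Ideal.span (Set.range fun i : Fin n =>
    (MvPolynomial.X i : MvPolynomial (Fin n) F) ^ Fintype.card F - MvPolynomial.X i) with hI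
  obtain ⟨r, hr, hsub⟩ := reduce_mod_span F n p
  have hrv : ∀ v : Fin n → F, MvPolynomial.eval v r = 0 := by
    intro v
    have h1 : MvPolynomial.eval v (p - r) = 0 := eval_span_zero F n v _ hsub
    rw [map_sub, h v, zero_sub, neg_eq_zero] at h1
    exact h1
  -- transport to `ULift (Fin n)` to match universes
  set e : Fin n → ULift.{u} (Fin n) := ULift.up with he
  have hinj : Function.Injective e := fun a b hab => congrArg ULift.down hab
  have hr0 : r = 0 := by
    have h0 : rename e r = 0 := by
      apply MvPolynomial.eq_zero_of_eval_eq_zero (ULift.{u} (Fin n)) F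
      · intro v
        rw [eval_rename]
        exact hrv _
      · rw [mem_restrictDegree]
        intro s hs i
        rw [support_rename_of_injective hinj] at hs
        obtain ⟨t, ht, rfl⟩ := Finset.mem_image.mp hs
        have : Finsupp.mapDomain e t i = t i.down := by
          have : i = e i.down := rfl
          rw [this, Finsupp.mapDomain_apply hinj]
        rw [this]
        exact (mem_restrictDegree _ _ _).mp hr t ht i.down
    exact rename_injective (R := F) e hinj (by rw [h0, map_zero])
  rw [hr0, sub_zero] at hsub
  exact hsub

theorem stmt_5 (F : Type*) [Field F] [Fintype F] (n : ℕ)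
    (J : Ideal (MvPolynomial (Fin n) F)) (f : MvPolynomial (Fin n) F) :
    (∀ v : Fin n → F, (∀ g ∈ J, MvPolynomial.eval v g = 0) → MvPolynomial.eval v f = 0) ↔
      f ∈ J ⊔ Ideal.span (Set.range fun i : Fin n =>
        MvPolynomial.X i ^ Fintype.card F - MvPolynomial.X i) := by
  classical
  set I := Ideal.span (Set.range fun i : Fin n =>
    (MvPolynomial.X i : MvPolynomial (Fin n) F) ^ Fintype.card F - MvPolynomial.X i) with hI
  constructor
  · intro H
    let g : (Fin n → F) → MvPolynomial (Fin n) F := fun v =>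
      if hv : ∃ p, p ∈ J ∧ MvPolynomial.eval v p ≠ 0 then
        C (MvPolynomial.eval v f / MvPolynomial.eval v hv.choose)
          * MvPolynomial.indicator v * hv.choose
      else 0
    have hgJ : ∀ v, g v ∈ J := by
      intro v
      simp only [g]
      split_ifs with hv
      · exact Ideal.mul_mem_left _ _ hv.choose_spec.1
      · exact zero_mem J
    set s : MvPolynomial (Fin n) F := ∑ v : Fin n → F, g v with hs
    have hsJ : s ∈ J := Ideal.sum_mem J fun v _ => hgJ v
    have hse : ∀ w : Fin n → F, MvPolynomial.eval w s = MvPolynomial.eval w f := by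
      intro w
      rw [hs, map_sum]
      rw [Finset.sum_eq_single w]
      · simp only [g]
        split_ifs with hw
        · have hne := hw.choose_spec.2
          simp only [map_mul, eval_C, eval_indicator_apply_eq_one, mul_one]
          field_simp
        · push_neg at hw
          rw [H w hw]
          simp
      · intro v _ hvw
        simp only [g]
        split_ifs with hv
        · simp [eval_indicator_apply_eq_zero w v (Ne.symm hvw)]
        · simp
      · intro h; exact absurd (Finset.mem_univ w) h
    have hfs : f - s ∈ I := by
      apply vanishing_mem_span
      intro v
      rw [map_sub, hse v, sub_self]
    exact Submodule.mem_sup.mpr ⟨s, hsJ, f - s, hfs, by ring⟩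
  · intro hf v hv
    obtain ⟨a, ha, b, hb, hab⟩ := Submodule.mem_sup.mp hf
    rw [← hab, map_add, hv a ha, eval_span_zero F n v b hb, add_zero]
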